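/- Let n ≥ 2, let k > 2 be a natural number, and let λ₁, …, λₙ be nonzero complex numbers. Define Φ : ℂⁿ → ℂ^{n−1} by Φ(z)_j = λ₁ z₁^{k−1}·conj(z_j) − λ_j z_j^{k−1}·conj(z₁) for j = 2, …, n. Let z ∈ ℂⁿ satisfy z₁ ≠ 0 and Φ(z) = 0. Then for every v ∈ ℂⁿ: if Σ_{i=1}^n λ_i z_i^{k−1} v_i = 0 and the real Fréchet derivative of Φ at z applied to v is 0, then v = 0. -/

import Mathlib

lemma auxD {N : ℕ} (c : ℂ) (m : ℕ) (i l : Fin N) (z v : Fin N → ℂ) :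
    ∃ D : (Fin N → ℂ) →L[ℝ] ℂ,
      HasFDerivAt (fun w : Fin N → ℂ => c * w i ^ m * (starRingEnd ℂ) (w l)) D z ∧
      D v = c * (m * z i ^ (m - 1)) * v i * (starRingEnd ℂ) (z l)
            + c * z i ^ m * (starRingEnd ℂ) (v l) := by
  have hp := (((hasDerivAt_pow m (z i)).hasFDerivAt).restrictScalars ℝ).comp z
      (hasFDerivAt_apply (𝕜 := ℝ) i z)
  have hc1 := hp.const_mul c
  have hconj := ((Complex.conjCLE.toContinuousLinearMap).hasFDerivAt).comp z
      (hasFDerivAt_apply (𝕜 := ℝ) l z)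
  have h := hc1.mul hconj
  have h' : HasFDerivAt (fun w : Fin N → ℂ => c * w i ^ m * (starRingEnd ℂ) (w l))
      ((c * ((fun x => x ^ m) ∘ fun f => f i) z) •
          (Complex.conjCLE.toContinuousLinearMap).comp (ContinuousLinearMap.proj l) +
        ((Complex.conjCLE.toContinuousLinearMap) ∘ fun f : Fin N → ℂ => f l) z •
          c • (ContinuousLinearMap.restrictScalars ℝ
            (ContinuousLinearMap.smulRight 1 (↑m * z i ^ (m - 1)))).comp
            (ContinuousLinearMap.proj i)) z := h
  refine ⟨_, h', ?_⟩
  simp [ContinuousLinearMap.smulRight_apply, Complex.conjCLE_apply, smul_eq_mul,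
      Function.comp]
  ring

theorem stmt10 (n k : ℕ) (hk : 2 < k) (lam : Fin (n + 2) → ℂ) (hlam : ∀ i, lam i ≠ 0)
    (Φ : (Fin (n + 2) → ℂ) → ({j : Fin (n + 2) // j ≠ 0} → ℂ))
    (hΦ : ∀ (z : Fin (n + 2) → ℂ) (j : {j : Fin (n + 2) // j ≠ 0}),
      Φ z j = lam 0 * z 0 ^ (k - 1) * (starRingEnd ℂ) (z j.1)
        - lam j.1 * z j.1 ^ (k - 1) * (starRingEnd ℂ) (z 0))
    (z : Fin (n + 2) → ℂ) (hz : z 0 ≠ 0) (hzΦ : Φ z = 0) :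
    ∀ v : Fin (n + 2) → ℂ,
      (∑ i, lam i * z i ^ (k - 1) * v i = 0) → fderiv ℝ Φ z v = 0 → v = 0 := by
  obtain ⟨p, rfl⟩ : ∃ p, k = p + 3 := ⟨k - 3, by omega⟩
  intro v hleaf hD
  have hleaf' : ∑ i, lam i * z i ^ (p + 2) * v i = 0 := hleaf
  have hΦ' : Φ = fun (w : Fin (n + 2) → ℂ) (j : {j : Fin (n + 2) // j ≠ 0}) =>
      lam 0 * w 0 ^ (p + 2) * (starRingEnd ℂ) (w j.1)
        - lam j.1 * w j.1 ^ (p + 2) * (starRingEnd ℂ) (w 0) := by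
    funext w j; exact hΦ w j
  subst hΦ'
  clear hΦ hleaf
  -- the component derivatives
  have hder : ∀ j : {j : Fin (n + 2) // j ≠ 0},
      ∃ D : (Fin (n + 2) → ℂ) →L[ℝ] ℂ,
        HasFDerivAt (fun w : Fin (n + 2) → ℂ =>
          lam 0 * w 0 ^ (p + 2) * (starRingEnd ℂ) (w j.1)
            - lam j.1 * w j.1 ^ (p + 2) * (starRingEnd ℂ) (w 0)) D z ∧
        D v = (lam 0 * ((p + 2 : ℕ) * z 0 ^ (p + 1)) * v 0 * (starRingEnd ℂ) (z j.1)
              + lam 0 * z 0 ^ (p + 2) * (starRingEnd ℂ) (v j.1))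
            - (lam j.1 * ((p + 2 : ℕ) * z j.1 ^ (p + 1)) * v j.1 * (starRingEnd ℂ) (z 0)
              + lam j.1 * z j.1 ^ (p + 2) * (starRingEnd ℂ) (v 0)) := by
    intro j
    obtain ⟨D1, h1, e1⟩ := auxD (lam 0) (p + 2) 0 j.1 z v
    obtain ⟨D2, h2, e2⟩ := auxD (lam j.1) (p + 2) j.1 0 z v
    refine ⟨D1 - D2, h1.sub h2, ?_⟩
    rw [ContinuousLinearMap.sub_apply, e1, e2]
    norm_num
  choose D hDer hDval using hder
  have hΦder : HasFDerivAt (fun (w : Fin (n + 2) → ℂ) (j : {j : Fin (n + 2) // j ≠ 0}) =>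
      lam 0 * w 0 ^ (p + 2) * (starRingEnd ℂ) (w j.1)
        - lam j.1 * w j.1 ^ (p + 2) * (starRingEnd ℂ) (w 0))
      (ContinuousLinearMap.pi D) z := hasFDerivAt_pi.2 hDer
  rw [hΦder.fderiv] at hD
  have hDv : ∀ j, D j v = 0 := by
    intro j
    have := congrFun hD j
    simpa using this
  have E : ∀ j : {j : Fin (n + 2) // j ≠ 0},
      (lam 0 * ((p + 2 : ℕ) * z 0 ^ (p + 1)) * v 0 * (starRingEnd ℂ) (z j.1)
        + lam 0 * z 0 ^ (p + 2) * (starRingEnd ℂ) (v j.1))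
      - (lam j.1 * ((p + 2 : ℕ) * z j.1 ^ (p + 1)) * v j.1 * (starRingEnd ℂ) (z 0)
        + lam j.1 * z j.1 ^ (p + 2) * (starRingEnd ℂ) (v 0)) = 0 := by
    intro j; rw [← hDval j]; exact hDv j
  have hP : ∀ j : {j : Fin (n + 2) // j ≠ 0},
      lam 0 * z 0 ^ (p + 2) * (starRingEnd ℂ) (z j.1)
        = lam j.1 * z j.1 ^ (p + 2) * (starRingEnd ℂ) (z 0) := by
    intro j
    have := congrFun hzΦ j
    simpa [sub_eq_zero] using this
  -- coordinates where z vanishes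
  have hvz : ∀ j : {j : Fin (n + 2) // j ≠ 0}, z j.1 = 0 → v j.1 = 0 := by
    intro j hj
    have e := E j
    rw [hj] at e
    simp [zero_pow, hz, hlam 0] at e
    exact e
  -- all coordinates are proportional
  have hrel : ∀ j : {j : Fin (n + 2) // j ≠ 0}, v j.1 * z 0 = v 0 * z j.1 := by
    intro j
    by_cases hj : z j.1 = 0
    · rw [hj, hvz j hj]; ring
    · set W := v 0 * z j.1 - v j.1 * z 0 with hW
      have key : lam 0 * z 0 ^ (p + 2) * (starRingEnd ℂ) (z j.1) *
          (((p + 2 : ℕ) : ℂ) * (starRingEnd ℂ) (z 0) * (starRingEnd ℂ) (z j.1) * W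
            - z 0 * z j.1 * ((starRingEnd ℂ) (v 0) * (starRingEnd ℂ) (z j.1)
                - (starRingEnd ℂ) (v j.1) * (starRingEnd ℂ) (z 0))) = 0 := by
        have e := E j
        have hp2 := hP j
        push_cast at e ⊢
        linear_combination (z 0 * z j.1 * (starRingEnd ℂ) (z 0) * (starRingEnd ℂ) (z j.1)) * e
          - (((p:ℂ) + 2) * v j.1 * z 0 * (starRingEnd ℂ) (z 0) * (starRingEnd ℂ) (z j.1)
              + (starRingEnd ℂ) (v 0) * z 0 * z j.1 * (starRingEnd ℂ) (z j.1)) * hp2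
      have hfac : lam 0 * z 0 ^ (p + 2) * (starRingEnd ℂ) (z j.1) ≠ 0 := by
        simp [hlam 0, hz, hj]
      have key2 : ((p + 2 : ℕ) : ℂ) * (starRingEnd ℂ) (z 0) * (starRingEnd ℂ) (z j.1) * W
          = z 0 * z j.1 * (starRingEnd ℂ) W := by
        have := (mul_eq_zero.1 key).resolve_left hfac
        rw [sub_eq_zero] at this
        rw [this, hW]
        simp only [map_sub, map_mul]
      have habs := congrArg (fun x : ℂ => ‖x‖) key2
      simp only [norm_mul, Complex.norm_conj, Complex.norm_natCast] at habs
      have ha : 0 < ‖z 0‖ := norm_pos_iff.mpr hz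
      have hb : 0 < ‖z j.1‖ := norm_pos_iff.mpr hj
      have hWabs : ‖W‖ = 0 := by
        have h1 : (((p + 2 : ℕ) : ℝ) - 1) *
            (‖z 0‖ * ‖z j.1‖ * ‖W‖) = 0 := by
          linear_combination habs
        have h2 : (((p + 2 : ℕ) : ℝ) - 1) ≠ 0 := by
          have : (1 : ℝ) < ((p + 2 : ℕ) : ℝ) := by push_cast; linarith
          exact sub_ne_zero.mpr (ne_of_gt this)
        have h3 := (mul_eq_zero.1 h1).resolve_left h2
        rcases mul_eq_zero.1 h3 with h | h
        · exact absurd h (by positivity)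
        · exact h
      have hW0 : W = 0 := by
        exact norm_eq_zero.1 hWabs
      rw [hW] at hW0
      linear_combination -hW0
  -- summation step
  have hterm : ∀ i : Fin (n + 2),
      lam i * z i ^ (p + 2) * v i * (z 0 * (starRingEnd ℂ) (z 0))
        = lam 0 * z 0 ^ (p + 2) * v 0 * ((starRingEnd ℂ) (z i) * z i) := by
    intro i
    by_cases hi : i = 0
    · subst hi; ring
    · have hA := hP ⟨i, hi⟩
      have hB := hrel ⟨i, hi⟩
      linear_combination (-(v i * z 0)) * hA
        + (lam 0 * z 0 ^ (p + 2) * (starRingEnd ℂ) (z i)) * hB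
  have hsum : lam 0 * z 0 ^ (p + 2) * v 0 * (∑ i, (starRingEnd ℂ) (z i) * z i) = 0 := by
    calc lam 0 * z 0 ^ (p + 2) * v 0 * (∑ i, (starRingEnd ℂ) (z i) * z i)
        = ∑ i, lam 0 * z 0 ^ (p + 2) * v 0 * ((starRingEnd ℂ) (z i) * z i) := by
          rw [Finset.mul_sum]
      _ = ∑ i, lam i * z i ^ (p + 2) * v i * (z 0 * (starRingEnd ℂ) (z 0)) :=
          Finset.sum_congr rfl fun i _ => (hterm i).symm
      _ = (∑ i, lam i * z i ^ (p + 2) * v i) * (z 0 * (starRingEnd ℂ) (z 0)) := by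
          rw [Finset.sum_mul]
      _ = 0 := by rw [hleaf', zero_mul]
  have hQ : (∑ i, (starRingEnd ℂ) (z i) * z i) ≠ 0 := by
    have hcast : (∑ i, (starRingEnd ℂ) (z i) * z i)
        = ((∑ i, Complex.normSq (z i) : ℝ) : ℂ) := by
      push_cast
      exact Finset.sum_congr rfl fun i _ => by
        rw [mul_comm, Complex.mul_conj]
    rw [hcast]
    rw [Complex.ofReal_ne_zero]
    have h1 : 0 < Complex.normSq (z 0) := Complex.normSq_pos.mpr hz
    have h2 : Complex.normSq (z 0) ≤ ∑ i, Complex.normSq (z i) :=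
      Finset.single_le_sum (fun i _ => Complex.normSq_nonneg (z i)) (Finset.mem_univ 0)
    exact ne_of_gt (lt_of_lt_of_le h1 h2)
  have hv0 : v 0 = 0 := by
    have h1 := (mul_eq_zero.1 hsum).resolve_right hQ
    have h2 := (mul_eq_zero.1 h1).resolve_left
      (by exact mul_ne_zero (hlam 0) (pow_ne_zero _ hz))
    exact h2
  funext i
  by_cases hi : i = 0
  · subst hi; simpa using hv0
  · have h := hrel ⟨i, hi⟩
    rw [hv0, zero_mul] at h
    have := (mul_eq_zero.1 h).resolve_right hz
    simpa using this
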